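/- If c₀ = a₁b₀ − a₀b₁ > 0, c₁ = a₂b₀ − a₀b₂ ≥ 0, and c₂ = a₂b₁ − a₁b₂ ≥ 0, and the denominator b₀ + b₁r + b₂r² is positive on [0, R], then f(r) = (a₀+a₁r+a₂r²)/(b₀+b₁r+b₂r²) is strictly increasing on [0, R], so the maximal SINR is attained at the power-constraint boundary r = R. -/
import Mathlib

/-- If `c₀ > 0`, `c₁ ≥ 0`, `c₂ ≥ 0`, the SINR is strictly increasing on
`[0, R]`, so the maximum is attained at the boundary `r = R`. -/
theorem stmt_8 (a₀ a₁ a₂ b₀ b₁ b₂ R : ℝ) (hR : 0 < R)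
    (hden : ∀ r ∈ Set.Icc (0 : ℝ) R, 0 < b₀ + b₁ * r + b₂ * r ^ 2)
    (hc₀ : 0 < a₁ * b₀ - a₀ * b₁) (hc₁ : 0 ≤ a₂ * b₀ - a₀ * b₂)
    (hc₂ : 0 ≤ a₂ * b₁ - a₁ * b₂)
    (f : ℝ → ℝ)
    (hf : ∀ r, f r = (a₀ + a₁ * r + a₂ * r ^ 2) / (b₀ + b₁ * r + b₂ * r ^ 2)) :
    StrictMonoOn f (Set.Icc 0 R) ∧ ∀ x ∈ Set.Icc (0 : ℝ) R, f x ≤ f R := by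
  have hmono : StrictMonoOn f (Set.Icc 0 R) := by
    intro x hx y hy hxy
    rw [hf, hf, div_lt_div_iff₀ (hden x hx) (hden y hy)]
    have hx0 : 0 ≤ x := hx.1
    have hy0 : 0 ≤ y := hy.1
    have hd : 0 < y - x := sub_pos.mpr hxy
    nlinarith [mul_pos hd hc₀, mul_nonneg (mul_nonneg hd.le (add_nonneg hx0 hy0)) hc₁,
      mul_nonneg (mul_nonneg (mul_nonneg hd.le hx0) hy0) hc₂]
  refine ⟨hmono, fun x hx => ?_⟩
  rcases eq_or_lt_of_le hx.2 with h | h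
  · rw [h]
  · exact (hmono hx (Set.right_mem_Icc.mpr hR.le) h).le
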